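/- Equal-increment minimum of the hitting-probability product (proof of Theorem 5.3): Let r, R, α > 0 with r·R ≤ α, let n ≥ 1 and d_1, …, d_n ≥ 0, and set K = ∏_{t=1}^n (1 + r·d_t). Then ∏_{t=1}^n R/(R + d_t·α) ≥ ( R/(R + (α/r)·(K^{1/n} − 1)) )^n; that is, subject to the constraint ∏_{t=1}^n (1 + r·d_t) = K, the product is minimized when all the d_t are equal. -/

import Mathlib

open Finset

/-- Superadditivity of the geometric mean (Mahler's inequality). -/
lemma geom_mean_superadd {n : ℕ} (hn : 0 < n) (a b : Fin n → ℝ)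
    (ha : ∀ i, 0 ≤ a i) (hb : ∀ i, 0 < b i) :
    (∏ i, a i) ^ ((n : ℝ)⁻¹) + (∏ i, b i) ^ ((n : ℝ)⁻¹) ≤
      (∏ i, (a i + b i)) ^ ((n : ℝ)⁻¹) := by
  have hab : ∀ i, 0 < a i + b i := fun i => add_pos_of_nonneg_of_pos (ha i) (hb i)
  have hP : 0 < ∏ i, (a i + b i) := Finset.prod_pos fun i _ => hab i
  have hnR : (0 : ℝ) < (n : ℝ) := by exact_mod_cast hn
  have hw : ∀ i ∈ (univ : Finset (Fin n)), (0 : ℝ) ≤ (n : ℝ)⁻¹ :=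
    fun _ _ => inv_nonneg.2 hnR.le
  have hwsum : ∑ _i ∈ (univ : Finset (Fin n)), (n : ℝ)⁻¹ = 1 := by
    simp [Finset.sum_const, Finset.card_univ, mul_comm]
    field_simp
  have key1 := Real.geom_mean_le_arith_mean_weighted univ (fun _ => (n : ℝ)⁻¹)
    (fun i => a i / (a i + b i)) hw hwsum
    (fun i _ => div_nonneg (ha i) (hab i).le)
  have key2 := Real.geom_mean_le_arith_mean_weighted univ (fun _ => (n : ℝ)⁻¹)
    (fun i => b i / (a i + b i)) hw hwsum
    (fun i _ => div_nonneg (hb i).le (hab i).le)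
  have hsum : (∑ i, (n : ℝ)⁻¹ * (a i / (a i + b i))) +
      (∑ i, (n : ℝ)⁻¹ * (b i / (a i + b i))) = 1 := by
    rw [← Finset.sum_add_distrib]
    calc (∑ i, ((n : ℝ)⁻¹ * (a i / (a i + b i)) + (n : ℝ)⁻¹ * (b i / (a i + b i))))
        = ∑ _i ∈ (univ : Finset (Fin n)), (n : ℝ)⁻¹ := by
          refine Finset.sum_congr rfl fun i _ => ?_
          rw [← mul_add, ← add_div, div_self (hab i).ne']
          ring
      _ = 1 := hwsum
  have hprod1 : (∏ i, (a i / (a i + b i)) ^ ((n : ℝ)⁻¹)) =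
      (∏ i, a i) ^ ((n : ℝ)⁻¹) / (∏ i, (a i + b i)) ^ ((n : ℝ)⁻¹) := by
    rw [Real.finset_prod_rpow _ _ (fun i _ => div_nonneg (ha i) (hab i).le),
      Finset.prod_div_distrib,
      Real.div_rpow (Finset.prod_nonneg fun i _ => ha i) hP.le]
  have hprod2 : (∏ i, (b i / (a i + b i)) ^ ((n : ℝ)⁻¹)) =
      (∏ i, b i) ^ ((n : ℝ)⁻¹) / (∏ i, (a i + b i)) ^ ((n : ℝ)⁻¹) := by
    rw [Real.finset_prod_rpow _ _ (fun i _ => div_nonneg (hb i).le (hab i).le),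
      Finset.prod_div_distrib,
      Real.div_rpow (Finset.prod_nonneg fun i _ => (hb i).le) hP.le]
  have hPr : 0 < (∏ i, (a i + b i)) ^ ((n : ℝ)⁻¹) := Real.rpow_pos_of_pos hP _
  have h1 : (∏ i, a i) ^ ((n : ℝ)⁻¹) / (∏ i, (a i + b i)) ^ ((n : ℝ)⁻¹) +
      (∏ i, b i) ^ ((n : ℝ)⁻¹) / (∏ i, (a i + b i)) ^ ((n : ℝ)⁻¹) ≤ 1 := by
    rw [← hprod1, ← hprod2, ← hsum]
    exact add_le_add key1 key2
  rw [← add_div, div_le_one hPr] at h1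
  exact h1

/-- Equal-increment minimum of the hitting-probability product (proof of
Theorem 5.3): subject to `∏ (1 + r·d_t) = K`, the product `∏ R/(R + d_t·α)`
is at least its value when all increments are equal, namely
`(R/(R + (α/r)·(K^{1/n} − 1)))^n`. -/
theorem stmt_10 (r R α : ℝ) (hr : 0 < r) (hR : 0 < R) (hα : 0 < α) (hrR : r * R ≤ α)
    (n : ℕ) (hn : 1 ≤ n) (d : Fin n → ℝ) (hd : ∀ t, 0 ≤ d t) :
    (R / (R + (α / r) * ((∏ t, (1 + r * d t)) ^ ((n : ℝ)⁻¹) - 1))) ^ n ≤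
      ∏ t, R / (R + d t * α) := by
  set c : ℝ := α / r with hc
  have hc0 : 0 < c := div_pos hα hr
  have hcR : R ≤ c := (le_div_iff₀ hr).2 (by linarith [hrR, mul_comm r R])
  set β : ℝ := 1 - R / c with hβ
  have hβ0 : 0 ≤ β := by
    have : R / c ≤ 1 := (div_le_one hc0).2 hcR
    simp only [hβ]; linarith
  have hβ1 : β < 1 := by
    have : 0 < R / c := div_pos hR hc0
    simp only [hβ]; linarith
  set x : Fin n → ℝ := fun t => 1 + r * d t with hx
  have hx1 : ∀ t, 1 ≤ x t := fun t => by
    have := mul_nonneg hr.le (hd t); simp [hx]; linarith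
  have hxβ : ∀ t, 0 < x t - β := fun t => by linarith [hx1 t]
  -- key: c * (x t - β) = R + d t * α
  have hkey : ∀ t, c * (x t - β) = R + d t * α := by
    intro t
    have h1 : c * (R / c) = R := mul_div_cancel₀ R hc0.ne'
    have h2 : c * (r * d t) = d t * α := by
      simp only [hc]; field_simp
    calc c * (x t - β) = c * (r * d t) + c * (R / c) := by simp only [hx, hβ]; ring
      _ = R + d t * α := by rw [h1, h2]; ring
  set G : ℝ := (∏ t, x t) ^ ((n : ℝ)⁻¹) with hG
  have hprodx : (1 : ℝ) ≤ ∏ t, x t := by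
    calc (1 : ℝ) = ∏ _t : Fin n, (1 : ℝ) := by simp
      _ ≤ ∏ t, x t := Finset.prod_le_prod (fun _ _ => zero_le_one) (fun t _ => hx1 t)
  have hG1 : 1 ≤ G := Real.one_le_rpow hprodx (by positivity)
  -- superadditivity with a = β constant, b = x - β
  have hsup := geom_mean_superadd (n := n) hn (fun _ => β) (fun t => x t - β)
    (fun _ => hβ0) hxβ
  have hconst : (∏ _t : Fin n, β) ^ ((n : ℝ)⁻¹) = β := by
    rw [Finset.prod_const, Finset.card_univ, Fintype.card_fin,
      ← Real.rpow_natCast β n, ← Real.rpow_mul hβ0]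
    rw [mul_inv_cancel₀ (Nat.cast_ne_zero.2 (by omega) : (n:ℝ) ≠ 0),
      Real.rpow_one]
  simp only [add_sub_cancel] at hsup
  rw [hconst] at hsup
  -- hsup : β + (∏ (x t - β))^(1/n) ≤ G
  have hprodβ : 0 < ∏ t, (x t - β) := Finset.prod_pos fun t _ => hxβ t
  have hGβ : (∏ t, (x t - β)) ^ ((n : ℝ)⁻¹) ≤ G - β := by linarith
  have hmain : ∏ t, (x t - β) ≤ (G - β) ^ n := by
    have h0 : 0 ≤ (∏ t, (x t - β)) ^ ((n : ℝ)⁻¹) := Real.rpow_nonneg hprodβ.le _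
    calc ∏ t, (x t - β)
        = ((∏ t, (x t - β)) ^ ((n : ℝ)⁻¹)) ^ n := by
          rw [← Real.rpow_natCast ((∏ t, (x t - β)) ^ ((n : ℝ)⁻¹)) n,
            ← Real.rpow_mul hprodβ.le,
            inv_mul_cancel₀ (Nat.cast_ne_zero.2 (by omega) : (n:ℝ) ≠ 0),
            Real.rpow_one]
      _ ≤ (G - β) ^ n := pow_le_pow_left₀ h0 hGβ n
  -- now rewrite both sides
  have hGβ0 : 0 < G - β := by linarith
  have hden : R + c * (G - 1) = c * (G - β) := by
    have : c * (R / c) = R := mul_div_cancel₀ R hc0.ne'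
    simp only [hβ]; field_simp; ring
  have hlhs : (R / (R + c * (G - 1))) ^ n = R ^ n / (c ^ n * (G - β) ^ n) := by
    rw [hden, div_pow, mul_pow]
  have hrhs : (∏ t, R / (R + d t * α)) = R ^ n / (c ^ n * ∏ t, (x t - β)) := by
    rw [Finset.prod_div_distrib, Finset.prod_const, Finset.card_univ, Fintype.card_fin]
    congr 1
    calc ∏ t, (R + d t * α) = ∏ t, c * (x t - β) := by
          refine Finset.prod_congr rfl fun t _ => (hkey t).symm
      _ = c ^ n * ∏ t, (x t - β) := by
          rw [Finset.prod_mul_distrib, Finset.prod_const, Finset.card_univ, Fintype.card_fin]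
  rw [hlhs, hrhs]
  apply div_le_div_of_nonneg_left (by positivity) (by positivity)
  exact mul_le_mul_of_nonneg_left hmain (by positivity)
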